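/- Let λ_u > 0, λ_e ≥ 0, D ≥ 0, H > 0, η_L > 0, η_N > 0 and R_e ≥ 0. Define P̄_c(R) = exp(−(π/2)·λ_u·H·(π·(η_N/η_L)^{1/2}·2^{R/2} − 2·H)), the thinned transmitter density λ_u' = λ_u·exp(−π·λ_e·D²), and C_s(R) = λ_u'·(R − R_e)·P̄_c(R). Then there exists a unique R* > R_e satisfying (ln 2/4)·π²·λ_u·H·(η_N/η_L)^{1/2}·2^{R*/2}·(R* − R_e) = 1, C_s is strictly increasing on [R_e, R*] and strictly decreasing on [R*, ∞), and R* is the unique maximizer of C_s over [R_e, ∞); moreover R* = R_e + (2/ln 2)·w where w is the unique positive real with w·e^w = 2^{1 − R_e/2}·η_L^{1/2}/(π²·λ_u·H·η_N^{1/2}). -/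

import Mathlib

open Real Set

/-- Theorem 5 of the paper: the optimal codeword rate with a secrecy guard zone, i.e. for the
objective `C_s(R) = λ_u' (R - R_e) P̄_c(R)` with thinned density `λ_u' = λ_u exp(-π λ_e D²)`. -/
theorem optimal_codeword_rate_guard_zone
    (lu le D H eL eN Re : ℝ) (hlu : 0 < lu) (hle : 0 ≤ le) (hD : 0 ≤ D)
    (hH : 0 < H) (heL : 0 < eL) (heN : 0 < eN) (hRe : 0 ≤ Re)
    (Pc Cs : ℝ → ℝ) (lu' : ℝ)
    (hPc : ∀ R : ℝ, Pc R
      = Real.exp (-(π / 2) * lu * H * (π * Real.sqrt (eN / eL) * (2 : ℝ) ^ (R / 2) - 2 * H)))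
    (hlu' : lu' = lu * Real.exp (-(π * le * D ^ 2)))
    (hCs : ∀ R : ℝ, Cs R = lu' * (R - Re) * Pc R) :
    ∃ Rstar : ℝ, Rstar > Re ∧
      -- first-order condition, with uniqueness of its solution on (Re, ∞)
      (Real.log 2 / 4) * π ^ 2 * lu * H * Real.sqrt (eN / eL)
          * (2 : ℝ) ^ (Rstar / 2) * (Rstar - Re) = 1 ∧
      (∀ R : ℝ, R > Re →
        (Real.log 2 / 4) * π ^ 2 * lu * H * Real.sqrt (eN / eL)
            * (2 : ℝ) ^ (R / 2) * (R - Re) = 1 → R = Rstar) ∧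
      -- monotonicity and unique maximizer over [Re, ∞)
      StrictMonoOn Cs (Icc Re Rstar) ∧
      StrictAntiOn Cs (Ici Rstar) ∧
      (∀ R ∈ Ici Re, R ≠ Rstar → Cs R < Cs Rstar) ∧
      -- Lambert-W expression
      (∀ w : ℝ, 0 < w →
        w * Real.exp w
          = (2 : ℝ) ^ (1 - Re / 2) * Real.sqrt eL / (π ^ 2 * lu * H * Real.sqrt eN) →
        Rstar = Re + (2 / Real.log 2) * w) := by
  have h2 : (0 : ℝ) < 2 := by norm_num
  have hlog2 : 0 < Real.log 2 := Real.log_pos (by norm_num)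
  have hsq : 0 < Real.sqrt (eN / eL) := Real.sqrt_pos.2 (div_pos heN heL)
  have hpi : 0 < π := Real.pi_pos
  set c : ℝ := Real.log 2 / 4 * π ^ 2 * lu * H * Real.sqrt (eN / eL) with hc
  have hcpos : 0 < c := by positivity
  set g : ℝ → ℝ := fun R => c * (2 : ℝ) ^ (R / 2) * (R - Re) with hg
  have hrp : ∀ R : ℝ, (0 : ℝ) < (2 : ℝ) ^ (R / 2) := fun R => Real.rpow_pos_of_pos h2 _
  -- strict monotonicity of g on [Re, ∞)
  have hgmono : StrictMonoOn g (Ici Re) := by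
    intro x hx y _ hxy
    have hx0 : 0 ≤ x - Re := by simpa [sub_nonneg] using hx
    have h1 : (2 : ℝ) ^ (x / 2) ≤ (2 : ℝ) ^ (y / 2) :=
      Real.rpow_le_rpow_left_iff (x := (2 : ℝ)) (by norm_num) |>.2 (by linarith)
    have := hrp y
    calc c * (2 : ℝ) ^ (x / 2) * (x - Re)
        ≤ c * (2 : ℝ) ^ (y / 2) * (x - Re) := by
          exact mul_le_mul_of_nonneg_right
            (mul_le_mul_of_nonneg_left h1 hcpos.le) hx0
      _ < c * (2 : ℝ) ^ (y / 2) * (y - Re) := by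
          apply mul_lt_mul_of_pos_left (by linarith) (by positivity)
  -- derivative of R ↦ 2^(R/2)
  have hD2 : ∀ x : ℝ, HasDerivAt (fun y : ℝ => (2 : ℝ) ^ (y / 2))
      ((2 : ℝ) ^ (x / 2) * Real.log 2 * (1 / 2)) x := by
    intro x
    have houter := (hasStrictDerivAt_const_rpow h2 (x / 2)).hasDerivAt
    have hinner : HasDerivAt (fun y : ℝ => y / 2) (1 / 2) x := by
      simpa using (hasDerivAt_id x).div_const 2
    have h : HasDerivAt (fun y : ℝ => (2 : ℝ) ^ (y / 2))
        ((2 : ℝ) ^ (x / 2) * Real.log 2 * (1 / 2)) x := HasDerivAt.comp x houter hinner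
    exact h
  -- derivative of Cs
  set f : ℝ → ℝ := fun R =>
    -(π / 2) * lu * H * (π * Real.sqrt (eN / eL) * (2 : ℝ) ^ (R / 2) - 2 * H) with hf
  have hCs' : Cs = fun R => lu' * (R - Re) * Real.exp (f R) := by
    funext R; rw [hCs, hPc]
  have hlu'pos : 0 < lu' := by rw [hlu']; positivity
  have hDCs : ∀ x : ℝ, HasDerivAt Cs (lu' * Real.exp (f x) * (1 - g x)) x := by
    intro x
    have hdf : HasDerivAt f
        (-(π / 2) * lu * H * (π * Real.sqrt (eN / eL) * ((2 : ℝ) ^ (x / 2) * Real.log 2 * (1 / 2)))) x := by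
      exact (((hD2 x).const_mul (π * Real.sqrt (eN / eL))).sub_const (2 * H)).const_mul _
    have hexp : HasDerivAt (fun R => Real.exp (f R))
        (Real.exp (f x) *
          (-(π / 2) * lu * H * (π * Real.sqrt (eN / eL) * ((2 : ℝ) ^ (x / 2) * Real.log 2 * (1 / 2))))) x :=
      (Real.hasDerivAt_exp (f x)).comp x hdf
    have hlin : HasDerivAt (fun R : ℝ => lu' * (R - Re)) lu' x := by
      simpa using ((hasDerivAt_id x).sub_const Re).const_mul lu'
    have := hlin.mul hexp
    rw [hCs']
    refine HasDerivAt.congr_deriv (f := fun R => lu' * (R - Re) * Real.exp (f R)) this ?_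
    simp only [hg, hc]
    ring
  have hCsCont : Continuous Cs :=
    continuous_iff_continuousAt.2 fun x => (hDCs x).continuousAt
  have hgcont : Continuous g := by
    have : Continuous fun R : ℝ => (2 : ℝ) ^ (R / 2) :=
      continuous_iff_continuousAt.2 fun x => (hD2 x).continuousAt
    exact (continuous_const.mul this).mul (continuous_id.sub continuous_const)
  -- existence of Rstar via IVT
  set M : ℝ := Re + (1 / (c * (2 : ℝ) ^ (Re / 2)) + 1) with hM
  have hReM : Re ≤ M := by
    have := hrp Re
    have h1 : 0 < 1 / (c * (2 : ℝ) ^ (Re / 2)) := by positivity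
    simp only [hM]; linarith
  have hgRe : g Re = 0 := by simp [hg]
  have hgM : 1 ≤ g M := by
    have ht : 0 < 1 / (c * (2 : ℝ) ^ (Re / 2)) := by positivity
    have h1 : (2 : ℝ) ^ (Re / 2) ≤ (2 : ℝ) ^ (M / 2) :=
      Real.rpow_le_rpow_left_iff (x := (2 : ℝ)) (by norm_num) |>.2 (by linarith [ht])
    have h2' : 0 < c * (2 : ℝ) ^ (Re / 2) := by positivity
    have hMRe : M - Re = 1 / (c * (2 : ℝ) ^ (Re / 2)) + 1 := by simp only [hM]; ring
    have hge : c * (2 : ℝ) ^ (Re / 2) * (M - Re) ≤ c * (2 : ℝ) ^ (M / 2) * (M - Re) := by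
      apply mul_le_mul_of_nonneg_right (mul_le_mul_of_nonneg_left h1 hcpos.le)
      rw [hMRe]; positivity
    have hval : c * (2 : ℝ) ^ (Re / 2) * (M - Re) = 1 + c * (2 : ℝ) ^ (Re / 2) := by
      rw [hMRe]; field_simp
    simp only [hg]
    nlinarith [mul_pos hcpos (hrp Re)]
  obtain ⟨Rstar, hRsmem, hRsg⟩ : ∃ Rstar ∈ Icc Re M, g Rstar = 1 := by
    have h1 : (1 : ℝ) ∈ Icc (g Re) (g M) := by rw [hgRe]; exact ⟨by norm_num, hgM⟩
    exact intermediate_value_Icc hReM hgcont.continuousOn h1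
  have hRsgt : Rstar > Re := by
    by_contra h
    push_neg at h
    have : Rstar = Re := le_antisymm h hRsmem.1
    rw [this, hgRe] at hRsg
    norm_num at hRsg
  -- uniqueness of the FOC solution
  have huniq : ∀ R : ℝ, R > Re → g R = 1 → R = Rstar := by
    intro R hR hgR
    exact hgmono.injOn (mem_Ici.2 hR.le) (mem_Ici.2 hRsgt.le) (by rw [hgR, hRsg])
  -- monotonicity
  have hmono : StrictMonoOn Cs (Icc Re Rstar) := by
    apply strictMonoOn_of_deriv_pos (convex_Icc _ _) hCsCont.continuousOn
    intro x hx
    rw [interior_Icc] at hx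
    rw [(hDCs x).deriv]
    have hgx : g x < 1 := by
      rw [← hRsg]
      exact hgmono (mem_Ici.2 hx.1.le) (mem_Ici.2 hRsgt.le) hx.2
    exact mul_pos (mul_pos hlu'pos (Real.exp_pos _)) (by linarith)
  have hanti : StrictAntiOn Cs (Ici Rstar) := by
    apply strictAntiOn_of_deriv_neg (convex_Ici _) hCsCont.continuousOn
    intro x hx
    rw [interior_Ici] at hx
    rw [(hDCs x).deriv]
    have hgx : 1 < g x := by
      rw [← hRsg]
      exact hgmono (mem_Ici.2 hRsgt.le) (mem_Ici.2 (hRsgt.trans hx).le) hx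
    exact mul_neg_of_pos_of_neg (mul_pos hlu'pos (Real.exp_pos _)) (by linarith)
  refine ⟨Rstar, hRsgt, hRsg, huniq, hmono, hanti, ?_, ?_⟩
  · intro R hR hne
    rcases lt_or_gt_of_ne hne with h | h
    · exact hmono ⟨hR, h.le⟩ ⟨hRsgt.le, le_rfl⟩ h
    · exact hanti (mem_Ici.2 le_rfl) (mem_Ici.2 h.le) h
  · intro w hw hweq
    have hRgt : Re + 2 / Real.log 2 * w > Re := by
      have : 0 < 2 / Real.log 2 * w := by positivity
      linarith
    have hsLpos : 0 < Real.sqrt eL := Real.sqrt_pos.2 heL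
    have hsNpos : 0 < Real.sqrt eN := Real.sqrt_pos.2 heN
    have hdenpos : 0 < π ^ 2 * lu * H * Real.sqrt eN := by positivity
    have hweq' : w * Real.exp w * (π ^ 2 * lu * H * Real.sqrt eN)
        = (2 : ℝ) ^ (1 - Re / 2) * Real.sqrt eL := by
      rw [eq_div_iff hdenpos.ne'] at hweq
      linarith
    have hgR : g (Re + 2 / Real.log 2 * w) = 1 := by
      have hsplit : (2 : ℝ) ^ ((Re + 2 / Real.log 2 * w) / 2)
          = (2 : ℝ) ^ (Re / 2) * Real.exp w := by
        have hdiv : (Re + 2 / Real.log 2 * w) / 2 = Re / 2 + w / Real.log 2 := by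
          field_simp
        have h1 : (2 : ℝ) ^ (w / Real.log 2) = Real.exp w := by
          rw [Real.rpow_def_of_pos h2]
          congr 1
          field_simp
        rw [hdiv, Real.rpow_add h2, h1]
      have hsqd : Real.sqrt (eN / eL) = Real.sqrt eN / Real.sqrt eL :=
        Real.sqrt_div heN.le eL
      have hPQ : (2 : ℝ) ^ (Re / 2) * (2 : ℝ) ^ (1 - Re / 2) = 2 := by
        rw [← Real.rpow_add h2]
        norm_num
      simp only [hg, hc, hsplit, hsqd, add_sub_cancel_left]
      field_simp
      linear_combination 2 * (2 : ℝ) ^ (Re / 2) * hweq'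
        + 2 * Real.sqrt eL * hPQ
    exact (huniq _ hRgt hgR).symm
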